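/- Let H_k, H : ℂ → ℂ be continuous maps such that H_k → H uniformly on every compact subset of ℂ. Then e(H_k) → e(H) uniformly on every compact subset of ℂ × [0,∞); that is, the extension H ↦ e(H) depends continuously on H in the compact-open topology. -/

import Mathlib

/-- `v_H(w,t) = max_{|W| = t} |H(w+W) - H(w)|`, realized as the supremum of the
(compact, hence bounded) image of the circle of radius `t`. -/
noncomputable def vmax (H : ℂ → ℂ) (w : ℂ) (t : ℝ) : ℝ :=
  sSup ((fun W => ‖H (w + W) - H w‖) '' Metric.sphere (0 : ℂ) t)

/-- The extension `e(H)(w,t) = (H(w), v_H(w,t))` of `H` to `ℂ × [0,∞)`. -/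
noncomputable def extMap (H : ℂ → ℂ) : ℂ × ℝ → ℂ × ℝ :=
  fun p => (H p.1, vmax H p.1 p.2)

lemma vmax_bdd (H : ℂ → ℂ) (hH : Continuous H) (w : ℂ) (t : ℝ) :
    BddAbove ((fun W => ‖H (w + W) - H w‖) '' Metric.sphere (0 : ℂ) t) :=
  ((isCompact_sphere (0 : ℂ) t).image (by continuity)).bddAbove

lemma vmax_le (G H : ℂ → ℂ) (hG : Continuous G) (hH : Continuous H) (w : ℂ) (t : ℝ)
    (ht : 0 ≤ t) (δ : ℝ)
    (hd : ∀ W ∈ Metric.sphere (0 : ℂ) t, dist (G (w + W)) (H (w + W)) ≤ δ)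
    (hw : dist (G w) (H w) ≤ δ) :
    vmax G w t ≤ vmax H w t + 2 * δ := by
  obtain ⟨W₀, hW₀⟩ : (Metric.sphere (0 : ℂ) t).Nonempty := NormedSpace.sphere_nonempty.2 ht
  have hδ0 : 0 ≤ δ := le_trans dist_nonneg hw
  have hvH0 : 0 ≤ vmax H w t := by
    refine le_trans (norm_nonneg _) (le_csSup (vmax_bdd H hH w t) ⟨W₀, hW₀, rfl⟩)
  apply Real.sSup_le
  · rintro x ⟨W, hW, rfl⟩
    have h1 : ‖G (w + W) - G w‖
        ≤ dist (G (w + W)) (H (w + W)) + ‖H (w + W) - H w‖ + dist (H w) (G w) := by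
      rw [Complex.dist_eq, Complex.dist_eq]
      simpa only [Complex.dist_eq] using dist_triangle4 (G (w + W)) (H (w + W)) (H w) (G w)
    have h2 : ‖H (w + W) - H w‖ ≤ vmax H w t :=
      le_csSup (vmax_bdd H hH w t) ⟨W, hW, rfl⟩
    have h3 : dist (H w) (G w) ≤ δ := by rw [dist_comm]; exact hw
    have h4 := hd W hW
    simp only []
    linarith
  · linarith

lemma vmax_dist (G H : ℂ → ℂ) (hG : Continuous G) (hH : Continuous H) (w : ℂ) (t : ℝ)
    (ht : 0 ≤ t) (δ : ℝ)
    (hd : ∀ W ∈ Metric.sphere (0 : ℂ) t, dist (G (w + W)) (H (w + W)) ≤ δ)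
    (hw : dist (G w) (H w) ≤ δ) :
    dist (vmax G w t) (vmax H w t) ≤ 2 * δ := by
  rw [Real.dist_eq, abs_sub_le_iff]
  constructor
  · have := vmax_le G H hG hH w t ht δ hd hw
    linarith
  · have hd' : ∀ W ∈ Metric.sphere (0 : ℂ) t, dist (H (w + W)) (G (w + W)) ≤ δ := by
      intro W hW; rw [dist_comm]; exact hd W hW
    have := vmax_le H G hH hG w t ht δ hd' (by rw [dist_comm]; exact hw)
    linarith

/-- The extension `H ↦ e(H)` depends continuously on `H` in the compact-open
topology: locally uniform convergence `H_k → H` on `ℂ` implies locally uniform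
convergence `e(H_k) → e(H)` on `ℂ × [0,∞)`. -/
theorem extMap_continuous_in_map (Hk : ℕ → ℂ → ℂ) (H : ℂ → ℂ)
    (hHk : ∀ k, Continuous (Hk k)) (hH : Continuous H)
    (hconv : ∀ K : Set ℂ, IsCompact K → TendstoUniformlyOn Hk H Filter.atTop K) :
    ∀ K : Set (ℂ × ℝ), IsCompact K → (∀ p ∈ K, 0 ≤ p.2) →
      TendstoUniformlyOn (fun k => extMap (Hk k)) (extMap H) Filter.atTop K := by
  intro K hK hKpos
  obtain ⟨r, hr⟩ := hK.isBounded.subset_closedBall 0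
  set M : ℝ := max r 0 with hM
  have hM0 : 0 ≤ M := le_max_right r 0
  have hnorm : ∀ p ∈ K, ‖p‖ ≤ M := by
    intro p hp
    have := hr hp
    rw [Metric.mem_closedBall, dist_zero_right] at this
    exact le_trans this (le_max_left r 0)
  set C : Set ℂ := Metric.closedBall (0 : ℂ) (2 * M) with hC
  have hCcpt : IsCompact C := isCompact_closedBall _ _
  have hmem : ∀ p ∈ K, ∀ W ∈ Metric.sphere (0 : ℂ) p.2, p.1 + W ∈ C := by
    intro p hp W hW
    rw [Metric.mem_sphere, dist_zero_right] at hW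
    rw [hC, Metric.mem_closedBall, dist_zero_right]
    have h1 : ‖p.1‖ ≤ M := le_trans (norm_fst_le p) (hnorm p hp)
    have h2 : ‖W‖ ≤ M := by
      rw [hW]
      calc p.2 ≤ |p.2| := le_abs_self _
        _ = ‖p.2‖ := rfl
        _ ≤ ‖p‖ := norm_snd_le p
        _ ≤ M := hnorm p hp
    calc ‖p.1 + W‖ ≤ ‖p.1‖ + ‖W‖ := norm_add_le _ _
      _ ≤ 2 * M := by linarith
  have hmem1 : ∀ p ∈ K, p.1 ∈ C := by
    intro p hp
    rw [hC, Metric.mem_closedBall, dist_zero_right]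
    have h1 : ‖p.1‖ ≤ M := le_trans (norm_fst_le p) (hnorm p hp)
    linarith
  rw [Metric.tendstoUniformlyOn_iff]
  intro ε hε
  have hconvC := (Metric.tendstoUniformlyOn_iff.1 (hconv C hCcpt)) (ε / 3) (by linarith)
  filter_upwards [hconvC] with k hk
  intro p hp
  rw [Prod.dist_eq, max_lt_iff]
  constructor
  · have := hk p.1 (hmem1 p hp)
    simp only [extMap]
    linarith
  · have hb : dist (vmax (Hk k) p.1 p.2) (vmax H p.1 p.2) ≤ 2 * (ε / 3) := by
      apply vmax_dist (Hk k) H (hHk k) hH p.1 p.2 (hKpos p hp)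
      · intro W hW
        rw [dist_comm]
        exact le_of_lt (hk _ (hmem p hp W hW))
      · rw [dist_comm]
        exact le_of_lt (hk _ (hmem1 p hp))
    calc dist (extMap H p).2 (extMap (Hk k) p).2
        = dist (vmax (Hk k) p.1 p.2) (vmax H p.1 p.2) := by
          simp [extMap, dist_comm]
      _ ≤ 2 * (ε / 3) := hb
      _ < ε := by linarith
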